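/- arXiv:1109.1994 — 4 statements merged into one kernel-verified Lean document; each statement's English description precedes it below -/
import Mathlib

section
/- Let G be a finite simple graph and let S₁, S₂ be two disjoint sets of vertices of G, each of size at least 2, with no edge of G joining a vertex of S₁ to a vertex of S₂. Assume that G has at least one triangle contained in S₁ ∪ S₂ (i.e., i(S₁ ∪ S₂) > 0). If C(S₁) ≤ C(S₁ ∪ S₂), then C(S₂) > C(S₁ ∪ S₂). -/
open Finset
open scoped Classical

/-- The set of triangles of a finite simple graph `G`: 3-element vertex sets
that are pairwise adjacent. -/
noncomputable def triangles {V : Type*} [Fintype V] (G : SimpleGraph V) : Finset (Finset V) :=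
  Finset.univ.filter (fun t => t.card = 3 ∧ (t : Set V).Pairwise G.Adj)

/-- `triIn G S` is the number of triangles of `G` with all three vertices in `S`. -/
noncomputable def triIn {V : Type*} [Fintype V] (G : SimpleGraph V) (S : Finset V) : ℕ :=
  ((triangles G).filter (fun t => t ⊆ S)).card

/-- `triOut G S` is the number of triangles of `G` with exactly two vertices in `S`. -/
noncomputable def triOut {V : Type*} [Fintype V] (G : SimpleGraph V) (S : Finset V) : ℕ :=
  ((triangles G).filter (fun t => (t ∩ S).card = 2)).card

/-- The cohesion of a set of vertices `S` in `G`: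
`C(S) = i(S)² / (choose(|S|,3) · (i(S) + o(S)))`, which is `0` when the
denominator vanishes (division by zero in `ℝ`). -/
noncomputable def cohesion {V : Type*} [Fintype V] (G : SimpleGraph V) (S : Finset V) : ℝ :=
  (triIn G S : ℝ) ^ 2 / ((S.card.choose 3 : ℝ) * ((triIn G S : ℝ) + (triOut G S : ℝ)))

lemma choose_three_add_lt {m n : ℕ} (hm : 2 ≤ m) (hn : 2 ≤ n) :
    m.choose 3 + n.choose 3 < (m + n).choose 3 := by
  rw [Nat.add_choose_eq]
  have h : (antidiagonal 3 : Finset (ℕ × ℕ)) = {(0,3),(1,2),(2,1),(3,0)} := by decide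
  rw [h]
  have h2 : 1 ≤ n.choose 2 := Nat.choose_pos hn
  simp [Finset.sum_insert]
  nlinarith [h2, hm, Nat.zero_le (m.choose 2 * n)]

lemma tri_inter_empty {V : Type*} [Fintype V] {G : SimpleGraph V} {S₁ S₂ : Finset V}
    (hdisj : Disjoint S₁ S₂) (hsep : ∀ u ∈ S₁, ∀ v ∈ S₂, ¬ G.Adj u v)
    {t : Finset V} (ht : t ∈ triangles G) : t ∩ S₁ = ∅ ∨ t ∩ S₂ = ∅ := by
  by_contra h
  push_neg at h
  obtain ⟨h1, h2⟩ := h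
  obtain ⟨u, hu⟩ := h1
  obtain ⟨v, hv⟩ := h2
  rw [Finset.mem_inter] at hu hv
  have hne : u ≠ v := fun h => (Finset.disjoint_left.mp hdisj hu.2) (h ▸ hv.2)
  simp only [triangles, Finset.mem_filter, Finset.mem_univ, true_and] at ht
  exact hsep u hu.2 v hv.2 (ht.2 (by simpa using hu.1) (by simpa using hv.1) hne)

lemma triIn_union {V : Type*} [Fintype V] {G : SimpleGraph V} {S₁ S₂ : Finset V}
    (hdisj : Disjoint S₁ S₂) (hsep : ∀ u ∈ S₁, ∀ v ∈ S₂, ¬ G.Adj u v) :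
    triIn G (S₁ ∪ S₂) = triIn G S₁ + triIn G S₂ := by
  unfold triIn
  have hcongr : (triangles G).filter (fun t => t ⊆ S₁ ∪ S₂)
      = (triangles G).filter (fun t => t ⊆ S₁ ∨ t ⊆ S₂) := by
    apply Finset.filter_congr
    intro t ht
    constructor
    · intro hsub
      rcases tri_inter_empty hdisj hsep ht with h | h
      · right
        intro x hx
        rcases Finset.mem_union.mp (hsub hx) with h1 | h2
        · exact absurd (Finset.mem_inter.mpr ⟨hx, h1⟩) (by simp [h])
        · exact h2
      · left
        intro x hx
        rcases Finset.mem_union.mp (hsub hx) with h1 | h2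
        · exact h1
        · exact absurd (Finset.mem_inter.mpr ⟨hx, h2⟩) (by simp [h])
    · rintro (h | h) <;> [exact h.trans Finset.subset_union_left;
        exact h.trans Finset.subset_union_right]
  rw [hcongr, Finset.filter_or, Finset.card_union_of_disjoint]
  rw [Finset.disjoint_left]
  intro t ht1 ht2
  simp only [Finset.mem_filter] at ht1 ht2
  have htcard : t.card = 3 := by
    have := ht1.1
    simp only [triangles, Finset.mem_filter] at this
    exact this.2.1
  have : t ⊆ S₁ ∩ S₂ := Finset.subset_inter ht1.2 ht2.2
  rw [Finset.disjoint_iff_inter_eq_empty.mp hdisj, Finset.subset_empty] at this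
  simp [this] at htcard

lemma triOut_union {V : Type*} [Fintype V] {G : SimpleGraph V} {S₁ S₂ : Finset V}
    (hdisj : Disjoint S₁ S₂) (hsep : ∀ u ∈ S₁, ∀ v ∈ S₂, ¬ G.Adj u v) :
    triOut G (S₁ ∪ S₂) = triOut G S₁ + triOut G S₂ := by
  unfold triOut
  have hdisj' : ∀ t : Finset V, Disjoint (t ∩ S₁) (t ∩ S₂) :=
    fun t => hdisj.mono Finset.inter_subset_right Finset.inter_subset_right
  have hsplit : ∀ t : Finset V, (t ∩ (S₁ ∪ S₂)).card = (t ∩ S₁).card + (t ∩ S₂).card := by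
    intro t
    rw [Finset.inter_union_distrib_left, Finset.card_union_of_disjoint (hdisj' t)]
  have hcongr : (triangles G).filter (fun t => (t ∩ (S₁ ∪ S₂)).card = 2)
      = (triangles G).filter (fun t => (t ∩ S₁).card = 2 ∨ (t ∩ S₂).card = 2) := by
    apply Finset.filter_congr
    intro t ht
    have hkey : (t ∩ S₁).card = 0 ∨ (t ∩ S₂).card = 0 := by
      rcases tri_inter_empty hdisj hsep ht with h | h <;> simp [h]
    rw [hsplit t]
    omega
  rw [hcongr, Finset.filter_or, Finset.card_union_of_disjoint]
  rw [Finset.disjoint_left]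
  intro t ht1 ht2
  simp only [Finset.mem_filter] at ht1 ht2
  have hkey : (t ∩ S₁).card = 0 ∨ (t ∩ S₂).card = 0 :=
    by rcases tri_inter_empty hdisj hsep ht1.1 with h | h <;> simp [h]
  omega

lemma triIn_eq_zero_of_card_lt {V : Type*} [Fintype V] (G : SimpleGraph V) {S : Finset V}
    (h : S.card < 3) : triIn G S = 0 := by
  unfold triIn
  rw [Finset.card_eq_zero, Finset.filter_eq_empty_iff]
  intro t ht hsub
  have : t.card = 3 := by
    simp only [triangles, Finset.mem_filter] at ht
    exact ht.2.1
  have := Finset.card_le_card hsub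
  omega

lemma cohesion_real_arith {a b p q c₁ c₂ N M : ℝ}
    (ha0 : 0 ≤ a) (hb0 : 0 ≤ b) (hap : a ≤ p) (hbq : b ≤ q)
    (hc1 : 0 ≤ c₁) (hc2 : 0 ≤ c₂)
    (hNc : c₁ + c₂ + 1 ≤ N) (hM : 0 < M) (hpq : 0 < p + q)
    (hMain : (a + b) ^ 2 = M * (N * (p + q)))
    (hA : a ^ 2 ≤ M * (c₁ * p)) (hB : b ^ 2 ≤ M * (c₂ * q)) : False := by
  have hpnn : 0 ≤ p := le_trans ha0 hap
  have hqnn : 0 ≤ q := le_trans hb0 hbq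
  rcases eq_or_lt_of_le hpnn with hp0 | hp_pos
  · have ha' : a = 0 := le_antisymm (hp0 ▸ hap) ha0
    have hq_pos : 0 < q := by linarith
    subst ha'
    rw [← hp0] at hMain
    nlinarith [mul_pos hM hq_pos]
  rcases eq_or_lt_of_le hqnn with hq0 | hq_pos
  · have hb' : b = 0 := le_antisymm (hq0 ▸ hbq) hb0
    subst hb'
    rw [← hq0] at hMain
    nlinarith [mul_pos hM hp_pos]
  have cauchy : (a + b) ^ 2 * (p * q) ≤ (a ^ 2 * q + b ^ 2 * p) * (p + q) := by
    nlinarith [sq_nonneg (a * q - b * p), mul_pos hp_pos hq_pos]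
  have step : a ^ 2 * q + b ^ 2 * p ≤ M * (c₁ + c₂) * (p * q) := by
    nlinarith [mul_le_mul_of_nonneg_right hA hqnn, mul_le_mul_of_nonneg_right hB hpnn]
  have final : M * (N * (p + q)) * (p * q) ≤ M * (c₁ + c₂) * (p * q) * (p + q) := by
    calc M * (N * (p + q)) * (p * q) = (a + b) ^ 2 * (p * q) := by rw [hMain]
    _ ≤ (a ^ 2 * q + b ^ 2 * p) * (p + q) := cauchy
    _ ≤ M * (c₁ + c₂) * (p * q) * (p + q) := by
        exact mul_le_mul_of_nonneg_right step (le_of_lt hpq)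
  nlinarith [mul_pos (mul_pos (mul_pos hM hpq) hp_pos) hq_pos, final, hNc]

theorem cohesion_lemma_of_disconnected {V : Type*} [Fintype V]
    (G : SimpleGraph V) (S₁ S₂ : Finset V)
    (hdisj : Disjoint S₁ S₂)
    (h₁ : 2 ≤ S₁.card) (h₂ : 2 ≤ S₂.card)
    (hsep : ∀ u ∈ S₁, ∀ v ∈ S₂, ¬ G.Adj u v)
    (htri : 0 < triIn G (S₁ ∪ S₂))
    (hle : cohesion G S₁ ≤ cohesion G (S₁ ∪ S₂)) :
    cohesion G (S₁ ∪ S₂) < cohesion G S₂ := by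
  by_contra hcon
  push_neg at hcon
  have hcard : (S₁ ∪ S₂).card = S₁.card + S₂.card := Finset.card_union_of_disjoint hdisj
  have hiu := triIn_union hdisj hsep
  have hou := triOut_union hdisj hsep
  have hab_pos : (0:ℝ) < (triIn G S₁ : ℝ) + (triIn G S₂ : ℝ) := by
    have : 0 < triIn G S₁ + triIn G S₂ := hiu ▸ htri
    exact_mod_cast this
  have hap : (triIn G S₁ : ℝ) ≤ (triIn G S₁ : ℝ) + (triOut G S₁ : ℝ) :=
    le_add_of_nonneg_right (Nat.cast_nonneg _)
  have hbq : (triIn G S₂ : ℝ) ≤ (triIn G S₂ : ℝ) + (triOut G S₂ : ℝ) :=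
    le_add_of_nonneg_right (Nat.cast_nonneg _)
  have hpq_pos : (0:ℝ) < ((triIn G S₁ : ℝ) + (triOut G S₁ : ℝ))
      + ((triIn G S₂ : ℝ) + (triOut G S₂ : ℝ)) := by
    have h1 := Nat.cast_nonneg (α := ℝ) (triOut G S₁)
    have h2 := Nat.cast_nonneg (α := ℝ) (triOut G S₂)
    linarith
  have hN_pos : (0:ℝ) < ((S₁ ∪ S₂).card.choose 3 : ℝ) := by
    exact_mod_cast Nat.choose_pos (show 3 ≤ (S₁ ∪ S₂).card by omega)
  have hNc : (S₁.card.choose 3 : ℝ) + (S₂.card.choose 3 : ℝ) + 1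
      ≤ ((S₁ ∪ S₂).card.choose 3 : ℝ) := by
    rw [hcard]
    exact_mod_cast choose_three_add_lt h₁ h₂
  have hM_eq : cohesion G (S₁ ∪ S₂) = ((triIn G S₁ : ℝ) + (triIn G S₂ : ℝ)) ^ 2 /
      (((S₁ ∪ S₂).card.choose 3 : ℝ) * (((triIn G S₁ : ℝ) + (triOut G S₁ : ℝ))
        + ((triIn G S₂ : ℝ) + (triOut G S₂ : ℝ)))) := by
    rw [cohesion, hiu, hou]
    push_cast
    ring_nf
  have hM_pos : 0 < cohesion G (S₁ ∪ S₂) := by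
    rw [hM_eq]
    exact div_pos (by positivity) (by positivity)
  have hMain : ((triIn G S₁ : ℝ) + (triIn G S₂ : ℝ)) ^ 2 = cohesion G (S₁ ∪ S₂) *
      (((S₁ ∪ S₂).card.choose 3 : ℝ) * (((triIn G S₁ : ℝ) + (triOut G S₁ : ℝ))
        + ((triIn G S₂ : ℝ) + (triOut G S₂ : ℝ)))) := by
    rw [hM_eq, div_mul_cancel₀]
    positivity
  have key : ∀ (S : Finset V), cohesion G S ≤ cohesion G (S₁ ∪ S₂) →
      ((triIn G S : ℝ)) ^ 2 ≤ cohesion G (S₁ ∪ S₂) * ((S.card.choose 3 : ℝ) *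
        ((triIn G S : ℝ) + (triOut G S : ℝ))) := by
    intro S hS
    have hdnn : (0:ℝ) ≤ (S.card.choose 3 : ℝ) * ((triIn G S : ℝ) + (triOut G S : ℝ)) := by
      positivity
    rcases eq_or_lt_of_le hdnn with hd0 | hdpos
    · have hin0 : (triIn G S : ℝ) = 0 := by
        rcases mul_eq_zero.mp hd0.symm with h | h
        · have h3 : S.card < 3 := by
            have := Nat.choose_eq_zero_iff.mp (by exact_mod_cast h)
            omega
          rw [triIn_eq_zero_of_card_lt G h3]
          norm_num
        · have h1 := Nat.cast_nonneg (α := ℝ) (triIn G S)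
          have h2 := Nat.cast_nonneg (α := ℝ) (triOut G S)
          linarith
      rw [hin0]
      have hnn : (0:ℝ) ≤ ((S.card.choose 3 : ℝ)) * ((0:ℝ) + (triOut G S : ℝ)) := by positivity
      nlinarith [mul_nonneg hM_pos.le hnn]
    · rw [cohesion, div_le_iff₀ hdpos] at hS
      calc ((triIn G S : ℝ)) ^ 2
          ≤ cohesion G (S₁ ∪ S₂) * ((S.card.choose 3 : ℝ)
            * ((triIn G S : ℝ) + (triOut G S : ℝ))) := hS
        _ = _ := rfl
  exact cohesion_real_arith (Nat.cast_nonneg _) (Nat.cast_nonneg _) hap hbq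
    (Nat.cast_nonneg _) (Nat.cast_nonneg _) hNc hM_pos hpq_pos hMain
    (key S₁ hle) (key S₂ hcon)
end

section
/- Let G be a finite simple graph on vertex set V and let S ⊆ V satisfy C(S) ≥ C(S′) for every S′ ⊆ V (S has maximum cohesion among all vertex subsets), and assume C(S) > 0. Then the subgraph of G induced by S is connected. -/
open Finset
open scoped Classical

lemma choose3_lt' (a b : ℕ) (ha : 1 ≤ a) (hb : 1 ≤ b) (hab : 3 ≤ a + b) :
    a.choose 3 + b.choose 3 < (a + b).choose 3 := by
  induction b with
  | zero => omega
  | succ b ih =>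
    rcases Nat.eq_zero_or_pos b with hb0 | hb0
    · subst hb0
      have h2 : 2 ≤ a := by omega
      have h : (a+1).choose 3 = a.choose 2 + a.choose 3 := Nat.choose_succ_succ' a 2
      have h1 : 1 ≤ a.choose 2 := Nat.choose_pos h2
      have h0 : Nat.choose 1 3 = 0 := rfl
      simp only [Nat.zero_add]
      omega
    · rcases Nat.lt_or_ge (a + b) 3 with hlt | hge
      · have ha1 : a = 1 := by omega
        have hb1 : b = 1 := by omega
        subst ha1; subst hb1; decide
      · have ih' := ih hb0 hge
        have h1 : (a + (b+1)).choose 3 = (a+b).choose 2 + (a+b).choose 3 := by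
          rw [← Nat.add_assoc]; exact Nat.choose_succ_succ' (a+b) 2
        have h2 : (b+1).choose 3 = b.choose 2 + b.choose 3 := Nat.choose_succ_succ' b 2
        have h3 : b.choose 2 ≤ (a+b).choose 2 := Nat.choose_le_choose 2 (by omega)
        omega

section aux

variable {V : Type*} [Fintype V] {G : SimpleGraph V}

lemma tri_adj' {t : Finset V} (ht : t ∈ triangles G) {x y : V}
    (hx : x ∈ t) (hy : y ∈ t) (hxy : x ≠ y) : G.Adj x y := by
  rw [triangles, mem_filter] at ht
  exact ht.2.2 (by simpa using hx) (by simpa using hy) hxy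

lemma tri_card' {t : Finset V} (ht : t ∈ triangles G) : t.card = 3 := by
  rw [triangles, mem_filter] at ht; exact ht.2.1

lemma triIn_card' {A : Finset V} (h : triIn G A ≠ 0) : 3 ≤ A.card := by
  rw [triIn] at h
  obtain ⟨t, ht⟩ := card_pos.1 (Nat.pos_of_ne_zero h)
  rw [mem_filter] at ht
  calc 3 = t.card := (tri_card' ht.1).symm
    _ ≤ A.card := card_le_card ht.2

section split
variable {A B : Finset V} (hd : Disjoint A B)
  (hsep : ∀ a ∈ A, ∀ b ∈ B, ¬ G.Adj a b)

include hd hsep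

lemma triIn_split' : triIn G (A ∪ B) = triIn G A + triIn G B := by
  rw [triIn, triIn, triIn, ← card_union_of_disjoint, ← filter_or]
  · congr 1
    apply filter_congr
    intro t ht
    constructor
    · intro hts
      by_contra hcon
      push_neg at hcon
      obtain ⟨a, ha, haA⟩ := not_subset.1 hcon.1
      obtain ⟨b, hb, hbB⟩ := not_subset.1 hcon.2
      have haB : a ∈ B := (mem_union.1 (hts ha)).resolve_left haA
      have hbA : b ∈ A := (mem_union.1 (hts hb)).resolve_right hbB
      have hab : a ≠ b := fun h => haA (h ▸ hbA)
      exact hsep b hbA a haB (tri_adj' ht hb ha hab.symm)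
    · rintro (h | h) x hx
      · exact mem_union_left _ (h hx)
      · exact mem_union_right _ (h hx)
  · rw [disjoint_left]
    intro t h1 h2
    rw [mem_filter] at h1 h2
    have hne : t.Nonempty := card_pos.1 (by rw [tri_card' h1.1]; norm_num)
    obtain ⟨x, hx⟩ := hne
    exact (disjoint_left.1 hd) (h1.2 hx) (h2.2 hx)

lemma triOut_split' : triOut G (A ∪ B) = triOut G A + triOut G B := by
  rw [triOut, triOut, triOut, ← card_union_of_disjoint, ← filter_or]
  · congr 1
    apply filter_congr
    intro t ht
    have hcard := tri_card' ht
    have hAB : (t ∩ A) ∩ (t ∩ B) = ∅ := by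
      rw [← Finset.disjoint_iff_inter_eq_empty]
      exact (hd.mono inter_subset_right inter_subset_right)
    have hunion : t ∩ (A ∪ B) = (t ∩ A) ∪ (t ∩ B) := inter_union_distrib_left t A B
    have hdsum : (t ∩ (A ∪ B)).card = (t ∩ A).card + (t ∩ B).card := by
      rw [hunion, card_union_of_disjoint]
      rw [Finset.disjoint_iff_inter_eq_empty]; exact hAB
    have key : ∀ x ∈ t ∩ A, ∀ y ∈ t ∩ B, False := by
      intro x hx y hy
      have hx' := mem_inter.1 hx; have hy' := mem_inter.1 hy
      have hxy : x ≠ y := fun h => (disjoint_left.1 hd) hx'.2 (h ▸ hy'.2)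
      exact hsep x hx'.2 y hy'.2 (tri_adj' ht hx'.1 hy'.1 hxy)
    constructor
    · intro h2
      rcases Nat.eq_zero_or_pos (t ∩ A).card with h | h
      · right; omega
      · left
        obtain ⟨x, hx⟩ := card_pos.1 h
        rcases Nat.eq_zero_or_pos (t ∩ B).card with h' | h'
        · omega
        · obtain ⟨y, hy⟩ := card_pos.1 h'
          exact absurd (key x hx y hy) (by simp)
    · rintro (h | h)
      · have hB0 : (t ∩ B).card = 0 := by
          rcases Nat.eq_zero_or_pos (t ∩ B).card with h' | h'
          · exact h'
          · obtain ⟨y, hy⟩ := card_pos.1 h'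
            obtain ⟨x, hx⟩ := card_pos.1 (show 0 < (t ∩ A).card by omega)
            exact absurd (key x hx y hy) (by simp)
        omega
      · have hA0 : (t ∩ A).card = 0 := by
          rcases Nat.eq_zero_or_pos (t ∩ A).card with h' | h'
          · exact h'
          · obtain ⟨x, hx⟩ := card_pos.1 h'
            obtain ⟨y, hy⟩ := card_pos.1 (show 0 < (t ∩ B).card by omega)
            exact absurd (key x hx y hy) (by simp)
        omega
  · rw [disjoint_left]
    intro t h1 h2
    rw [mem_filter] at h1 h2
    obtain ⟨x, hx⟩ := card_pos.1 (show 0 < (t ∩ A).card by omega)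
    obtain ⟨y, hy⟩ := card_pos.1 (show 0 < (t ∩ B).card by omega)
    have hx' := mem_inter.1 hx; have hy' := mem_inter.1 hy
    have hxy : x ≠ y := fun h => (disjoint_left.1 hd) hx'.2 (h ▸ hy'.2)
    exact hsep x hx'.2 y hy'.2 (tri_adj' h1.1 hx'.1 hy'.1 hxy)

end split

omit [Fintype V] in
lemma exists_split' (S : Finset V) (hS : S.Nonempty)
    (hcon : ¬ (G.induce (S : Set V)).Connected) :
    ∃ A : Finset V, A ⊆ S ∧ A.Nonempty ∧ (S \ A).Nonempty ∧
      ∀ a ∈ A, ∀ b ∈ S \ A, ¬ G.Adj a b := by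
  have hne : Nonempty ↑(S : Set V) := by
    obtain ⟨x, hx⟩ := hS; exact ⟨⟨x, by simpa using hx⟩⟩
  rw [SimpleGraph.connected_iff] at hcon
  push_neg at hcon
  obtain ⟨u, v, huv⟩ : ∃ u v : ↑(S : Set V), ¬ (G.induce (S : Set V)).Reachable u v := by
    by_contra h; push_neg at h; exact (hcon (fun a b => h a b)).false hne.some
  refine ⟨S.filter (fun a => ∃ h : a ∈ (S : Set V), (G.induce (S : Set V)).Reachable u ⟨a, h⟩),
    filter_subset _ _, ⟨u.1, ?_⟩, ⟨v.1, ?_⟩, ?_⟩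
  · rw [mem_filter]
    refine ⟨by simp, u.2, ?_⟩
    rw [Subtype.coe_eta]
  · rw [mem_sdiff, mem_filter]
    refine ⟨by simp, ?_⟩
    rintro ⟨-, h, hr⟩
    rw [Subtype.coe_eta] at hr
    exact huv hr
  · intro a ha b hb hadj
    rw [mem_filter] at ha
    rw [mem_sdiff, mem_filter] at hb
    obtain ⟨haS, hmem, hreach⟩ := ha
    have hbS : b ∈ (S : Set V) := by simpa using hb.1
    have hA : (G.induce (S : Set V)).Adj ⟨a, hmem⟩ ⟨b, hbS⟩ := hadj
    exact hb.2 ⟨hb.1, hbS, hreach.trans hA.reachable⟩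

/-- From `cohesion G A ≤ M` (with `M ≥ 0`) deduce the polynomial inequality. -/
lemma coh_le_poly {A : Finset V} {M : ℝ} (hM : 0 ≤ M)
    (h : cohesion G A ≤ M) :
    (triIn G A : ℝ) ^ 2 ≤ M * ((A.card.choose 3 : ℝ) * ((triIn G A : ℝ) + (triOut G A : ℝ))) := by
  rcases Nat.eq_zero_or_pos (triIn G A) with h0 | h0
  · have hz : (triIn G A : ℝ) = 0 := by exact_mod_cast h0
    rw [hz]
    have h1 : (0:ℝ) ≤ (A.card.choose 3 : ℝ) := Nat.cast_nonneg _
    have h2 : (0:ℝ) ≤ (triOut G A : ℝ) := Nat.cast_nonneg _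
    nlinarith [mul_nonneg hM (mul_nonneg h1 h2)]
  · have hc : 0 < (A.card.choose 3 : ℝ) := by
      have := Nat.choose_pos (triIn_card' (Nat.pos_iff_ne_zero.1 h0))
      exact_mod_cast this
    have hd : 0 < ((triIn G A : ℝ) + (triOut G A : ℝ)) := by
      have : (0:ℝ) < (triIn G A : ℝ) := by exact_mod_cast h0
      positivity
    rw [cohesion, div_le_iff₀ (by positivity)] at h
    linarith [h]

/-- Pure real-number contradiction at the heart of the argument. -/
lemma real_contra (M x y oA oB cA cB cS : ℝ)
    (hM : 0 < M) (hx0 : 0 ≤ x) (hy0 : 0 ≤ y) (hoA0 : 0 ≤ oA) (hoB0 : 0 ≤ oB)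
    (hcA0 : 0 ≤ cA) (hcB0 : 0 ≤ cB)
    (hx2 : x ^ 2 ≤ M * (cA * (x + oA))) (hy2 : y ^ 2 ≤ M * (cB * (y + oB)))
    (hEq : (x + y) ^ 2 = M * (cS * ((x + oA) + (y + oB))))
    (hcR : cA + cB + 1 ≤ cS)
    (hdS : 0 < (x + oA) + (y + oB)) : False := by
  have hdA0 : (0:ℝ) ≤ x + oA := by linarith
  have hdB0 : (0:ℝ) ≤ y + oB := by linarith
  have h3 : x ^ 2 * y ^ 2 ≤ (M * (cA * (x + oA))) * (M * (cB * (y + oB))) :=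
    mul_le_mul hx2 hy2 (sq_nonneg y) ((sq_nonneg x).trans hx2)
  have h2xy : 2 * (x * y) ≤ M * (cA * (y + oB)) + M * (cB * (x + oA)) := by
    nlinarith [h3, sq_nonneg (M * (cA * (y + oB)) - M * (cB * (x + oA))),
      mul_nonneg (mul_nonneg hM.le hcA0) hdB0,
      mul_nonneg (mul_nonneg hM.le hcB0) hdA0,
      mul_nonneg hx0 hy0]
  have hfin : (x + y) ^ 2 ≤ M * ((cA + cB) * ((x + oA) + (y + oB))) := by
    nlinarith [hx2, hy2, h2xy]
  have hlt : M * ((cA + cB) * ((x + oA) + (y + oB))) < M * (cS * ((x + oA) + (y + oB))) := by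
    apply mul_lt_mul_of_pos_left _ hM
    apply mul_lt_mul_of_pos_right _ hdS
    linarith
  linarith [hEq, hfin, hlt]

end aux

theorem maxCohesion_connected {V : Type*} [Fintype V]
    (G : SimpleGraph V) (S : Finset V)
    (hmax : ∀ S' : Finset V, cohesion G S' ≤ cohesion G S)
    (hpos : 0 < cohesion G S) :
    (G.induce (S : Set V)).Connected := by
  by_contra hcon
  have hiS : triIn G S ≠ 0 := by
    intro h
    rw [cohesion, h] at hpos
    norm_num at hpos
  have hden : (0:ℝ) < (S.card.choose 3 : ℝ) * ((triIn G S : ℝ) + (triOut G S : ℝ)) := by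
    have hnum : (0:ℝ) ≤ (S.card.choose 3 : ℝ) * ((triIn G S : ℝ) + (triOut G S : ℝ)) := by
      positivity
    rcases hnum.lt_or_eq with h | h
    · exact h
    · rw [cohesion, ← h, div_zero] at hpos
      exact absurd hpos (lt_irrefl 0)
  have hcS : (0:ℝ) < (S.card.choose 3 : ℝ) := by
    rcases (Nat.cast_nonneg (S.card.choose 3) : (0:ℝ) ≤ _).lt_or_eq with h | h
    · exact h
    · rw [← h, zero_mul] at hden; exact absurd hden (lt_irrefl 0)
  have hdS : (0:ℝ) < ((triIn G S : ℝ) + (triOut G S : ℝ)) := by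
    have hd0 : (0:ℝ) ≤ ((triIn G S : ℝ) + (triOut G S : ℝ)) := by positivity
    rcases hd0.lt_or_eq with h | h
    · exact h
    · rw [← h, mul_zero] at hden; exact absurd hden (lt_irrefl 0)
  have hS3 : 3 ≤ S.card := by
    by_contra h
    push_neg at h
    rw [Nat.choose_eq_zero_of_lt h] at hcS
    norm_num at hcS
  have hSne : S.Nonempty := card_pos.1 (by omega)
  obtain ⟨A, hAS, hAne, hBne, hsep⟩ := exists_split' S hSne hcon
  have hd : Disjoint A (S \ A) := disjoint_sdiff
  have hAB : A ∪ (S \ A) = S := union_sdiff_of_subset hAS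
  have hi : triIn G S = triIn G A + triIn G (S \ A) := by
    conv_lhs => rw [← hAB]
    exact triIn_split' hd hsep
  have ho : triOut G S = triOut G A + triOut G (S \ A) := by
    conv_lhs => rw [← hAB]
    exact triOut_split' hd hsep
  have hcard : S.card = A.card + (S \ A).card := by
    conv_lhs => rw [← hAB]
    exact card_union_of_disjoint hd
  have hchoose : A.card.choose 3 + (S \ A).card.choose 3 < S.card.choose 3 := by
    rw [hcard]
    exact choose3_lt' _ _ (card_pos.2 hAne) (card_pos.2 hBne) (by omega)
  have hix : (triIn G S : ℝ) = (triIn G A : ℝ) + (triIn G (S \ A) : ℝ) := by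
    rw [hi]; push_cast; ring
  have hox : (triOut G S : ℝ) = (triOut G A : ℝ) + (triOut G (S \ A) : ℝ) := by
    rw [ho]; push_cast; ring
  have hEq : ((triIn G A : ℝ) + (triIn G (S \ A) : ℝ)) ^ 2
      = cohesion G S * ((S.card.choose 3 : ℝ) *
        (((triIn G A : ℝ) + (triOut G A : ℝ)) + ((triIn G (S \ A) : ℝ) + (triOut G (S \ A) : ℝ)))) := by
    have hDne : (S.card.choose 3 : ℝ) * ((triIn G S : ℝ) + (triOut G S : ℝ)) ≠ 0 := ne_of_gt hden
    have h1 : cohesion G S * ((S.card.choose 3 : ℝ) * ((triIn G S : ℝ) + (triOut G S : ℝ)))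
        = (triIn G S : ℝ) ^ 2 := by
      rw [cohesion, div_mul_cancel₀ _ hDne]
    rw [hix, hox] at h1
    rw [← h1]
    ring
  have hcR : (A.card.choose 3 : ℝ) + ((S \ A).card.choose 3 : ℝ) + 1 ≤ (S.card.choose 3 : ℝ) := by
    exact_mod_cast hchoose
  have hdSx : (0:ℝ) < ((triIn G A : ℝ) + (triOut G A : ℝ))
      + ((triIn G (S \ A) : ℝ) + (triOut G (S \ A) : ℝ)) := by
    rw [hix, hox] at hdS; linarith
  exact real_contra (cohesion G S) _ _ _ _ _ _ _ hpos
    (Nat.cast_nonneg _) (Nat.cast_nonneg _) (Nat.cast_nonneg _) (Nat.cast_nonneg _)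
    (Nat.cast_nonneg _) (Nat.cast_nonneg _)
    (coh_le_poly hpos.le (hmax A)) (coh_le_poly hpos.le (hmax (S \ A)))
    hEq hcR hdSx
end

section
/- Let G = (V,E) be a finite simple graph with n = |V| ≥ 4, let G′ be the graph obtained from G by the clique-attachment construction, and let K ⊆ V be a clique of G of size k with 3 ≤ k ≤ n. Then, computing in G′: i_{G′}(K) = choose(k,3), o_{G′}(K) = choose(k,2)·(n−k), and hence the cohesion of K in G′ equals λ(k) = choose(k,3) / (choose(k,3) + choose(k,2)·(n−k)). -/
open Finset
open scoped Classical

/-- The clique-attachment construction: for each non-adjacent pair `{u,v}` of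
vertices of `G`, add the edge `uv`, attach a fresh clique `K_{u,v}` of `T` new
vertices, and join both `u` and `v` to every vertex of that clique.  The added
cliques for distinct non-adjacent pairs are disjoint.  (Note that after adding
all the missing edges, the original vertex set becomes a clique.) -/
noncomputable def cliqueAttach {V : Type*} [Fintype V] (G : SimpleGraph V) (T : ℕ) :
    SimpleGraph (V ⊕ ({p : Sym2 V // ¬ p.IsDiag ∧ p ∉ G.edgeSet} × Fin T)) where
  Adj x y :=
    match x, y with
    | Sum.inl a, Sum.inl b => a ≠ b
    | Sum.inl a, Sum.inr (p, _) => a ∈ (p : Sym2 V)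
    | Sum.inr (p, _), Sum.inl a => a ∈ (p : Sym2 V)
    | Sum.inr (p, i), Sum.inr (q, j) => p = q ∧ i ≠ j
  symm := ⟨by
    rintro (a | ⟨p, i⟩) (b | ⟨q, j⟩) h <;> simp_all <;> tauto⟩
  loopless := ⟨by
    rintro (a | ⟨p, i⟩) h <;> simp_all⟩

theorem clique_cohesion_in_cliqueAttach {V : Type*} [Fintype V] (G : SimpleGraph V)
    (hn : 4 ≤ Fintype.card V)
    (T : ℕ) (hT : T = 2 * (Nat.choose (Fintype.card V) 3) ^ 4)
    (K : Finset V) (k : ℕ) (hclique : G.IsClique (K : Set V)) (hcard : K.card = k)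
    (h3 : 3 ≤ k) (hkn : k ≤ Fintype.card V) :
    triIn (cliqueAttach G T) (K.image Sum.inl) = Nat.choose k 3 ∧
    triOut (cliqueAttach G T) (K.image Sum.inl) =
      Nat.choose k 2 * (Fintype.card V - k) ∧
    cohesion (cliqueAttach G T) (K.image Sum.inl) =
      (Nat.choose k 3 : ℝ) /
        ((Nat.choose k 3 + Nat.choose k 2 * (Fintype.card V - k) : ℕ) : ℝ) := by
  set S : Finset (V ⊕ ({p : Sym2 V // ¬ p.IsDiag ∧ p ∉ G.edgeSet} × Fin T)) :=
    K.image Sum.inl with hS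
  have hinj : Function.Injective
      (Sum.inl : V → V ⊕ ({p : Sym2 V // ¬ p.IsDiag ∧ p ∉ G.edgeSet} × Fin T)) :=
    Sum.inl_injective
  have hScard : S.card = k := by
    rw [hS, Finset.card_image_of_injective _ hinj, hcard]
  have hadj_ll : ∀ a b : V, (cliqueAttach G T).Adj (Sum.inl a) (Sum.inl b) ↔ a ≠ b := by
    intro a b; rfl
  have hnotS : ∀ c : V, c ∉ K → Sum.inl c ∉ S := by
    intro c hcK h
    obtain ⟨a, haK, ha⟩ := Finset.mem_image.mp h
    exact hcK (by rwa [hinj ha] at haK)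
  -- triIn
  have hIn : ((triangles (cliqueAttach G T)).filter (fun t => t ⊆ S)) =
      S.powersetCard 3 := by
    ext t
    simp only [triangles, Finset.mem_filter, Finset.mem_univ, true_and,
      Finset.mem_powersetCard]
    constructor
    · rintro ⟨⟨hc, _⟩, hsub⟩; exact ⟨hsub, hc⟩
    · rintro ⟨hsub, hc⟩
      refine ⟨⟨hc, ?_⟩, hsub⟩
      intro x hx y hy hxy
      obtain ⟨a, _, rfl⟩ := Finset.mem_image.mp (hsub hx)
      obtain ⟨b, _, rfl⟩ := Finset.mem_image.mp (hsub hy)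
      exact (hadj_ll a b).mpr (fun h => hxy (by rw [h]))
  have hIn' : triIn (cliqueAttach G T) S = Nat.choose k 3 := by
    rw [triIn, Finset.filter_congr_decidable, hIn, Finset.card_powersetCard, hScard]
  -- triOut
  have key : ((S.powersetCard 2) ×ˢ ((Finset.univ : Finset V) \ K)).card =
      triOut (cliqueAttach G T) S := by
    rw [triOut]
    apply Finset.card_bij (fun pc _ => insert (Sum.inl pc.2) pc.1)
    · rintro ⟨p, c⟩ hpc
      simp only [Finset.mem_product, Finset.mem_powersetCard, Finset.mem_sdiff,
        Finset.mem_univ, true_and] at hpc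
      obtain ⟨⟨hpS, hp2⟩, hcK⟩ := hpc
      have hcS : Sum.inl c ∉ S := hnotS c hcK
      have hnotin : Sum.inl c ∉ p := fun h => hcS (hpS h)
      simp only [triangles, Finset.mem_filter, Finset.mem_univ, true_and]
      refine ⟨⟨?_, ?_⟩, ?_⟩
      · rw [Finset.card_insert_of_notMem hnotin, hp2]
      · intro x hx y hy hxy
        simp only [Finset.coe_insert, Set.mem_insert_iff, Finset.mem_coe] at hx hy
        have keyadj : ∀ z ∈ p, (cliqueAttach G T).Adj (Sum.inl c) z := by
          intro z hz
          obtain ⟨a, haK, rfl⟩ := Finset.mem_image.mp (hpS hz)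
          exact (hadj_ll c a).mpr (fun h => hcK (h ▸ haK))
        rcases hx with rfl | hx
        · rcases hy with rfl | hy
          · exact absurd rfl hxy
          · exact keyadj y hy
        · rcases hy with rfl | hy
          · exact ((cliqueAttach G T).adj_symm (keyadj x hx))
          · obtain ⟨a, _, rfl⟩ := Finset.mem_image.mp (hpS hx)
            obtain ⟨b, _, rfl⟩ := Finset.mem_image.mp (hpS hy)
            exact (hadj_ll a b).mpr (fun h => hxy (by rw [h]))
      · convert hp2 using 2
        ext y
        simp only [Finset.mem_inter, Finset.mem_insert]
        constructor
        · rintro ⟨rfl | hy, hyS⟩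
          · exact absurd hyS hcS
          · exact hy
        · exact fun hy => ⟨Or.inr hy, hpS hy⟩
    · rintro ⟨p, c⟩ hpc ⟨p', c'⟩ hpc' heq
      dsimp only at heq
      simp only [Finset.mem_product, Finset.mem_powersetCard, Finset.mem_sdiff,
        Finset.mem_univ, true_and] at hpc hpc'
      obtain ⟨⟨hpS, hp2⟩, hcK⟩ := hpc
      obtain ⟨⟨hpS', hp2'⟩, hcK'⟩ := hpc'
      have hcS : Sum.inl c ∉ S := hnotS c hcK
      have hcS' : Sum.inl c' ∉ S := hnotS c' hcK'
      have hpp' : p = p' := by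
        have h1 : insert (Sum.inl c) p ∩ S = p := by
          rw [Finset.insert_inter_of_notMem hcS, Finset.inter_eq_left.mpr hpS]
        have h2 : insert (Sum.inl c') p' ∩ S = p' := by
          rw [Finset.insert_inter_of_notMem hcS', Finset.inter_eq_left.mpr hpS']
        rw [← h1, ← h2, heq]
      have hcc' : c = c' := by
        have hmem : Sum.inl c ∈ insert (Sum.inl c') p' := heq ▸ Finset.mem_insert_self _ _
        rcases Finset.mem_insert.mp hmem with h | h
        · exact hinj h
        · exact absurd (hpS' h) hcS
      cases hpp'; cases hcc'; rfl
    · intro t ht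
      simp only [triangles, Finset.mem_filter, Finset.mem_univ, true_and] at ht
      obtain ⟨⟨hc3, hpair⟩, hc2⟩ := ht
      replace hc2 : (t ∩ S).card = 2 := by
        rw [← hc2]
        congr 1
        ext y
        simp only [Finset.mem_inter]
      have hsdiff : (t \ S).card = 1 := by
        have := Finset.card_inter_add_card_sdiff t S
        omega
      obtain ⟨x, hx⟩ := Finset.card_eq_one.mp hsdiff
      have hxt : x ∈ t := (Finset.mem_sdiff.mp (hx ▸ Finset.mem_singleton_self x)).1
      have hxS : x ∉ S := (Finset.mem_sdiff.mp (hx ▸ Finset.mem_singleton_self x)).2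
      obtain ⟨u, v, huv, hts⟩ := Finset.card_eq_two.mp hc2
      have hut : u ∈ t ∩ S := hts ▸ Finset.mem_insert_self _ _
      have hvt : v ∈ t ∩ S := hts ▸ Finset.mem_insert_of_mem (Finset.mem_singleton_self v)
      obtain ⟨a, haK, rfl⟩ := Finset.mem_image.mp (Finset.mem_inter.mp hut).2
      obtain ⟨b, hbK, rfl⟩ := Finset.mem_image.mp (Finset.mem_inter.mp hvt).2
      have hab : a ≠ b := fun h => huv (by rw [h])
      have hxu : x ≠ Sum.inl a := fun h => hxS (h ▸ (Finset.mem_inter.mp hut).2)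
      have hxv : x ≠ Sum.inl b := fun h => hxS (h ▸ (Finset.mem_inter.mp hvt).2)
      have hadjxa : (cliqueAttach G T).Adj x (Sum.inl a) :=
        hpair hxt (Finset.mem_inter.mp hut).1 hxu
      have hadjxb : (cliqueAttach G T).Adj x (Sum.inl b) :=
        hpair hxt (Finset.mem_inter.mp hvt).1 hxv
      rcases x with c | ⟨⟨q, hq⟩, i⟩
      · have hcK : c ∉ K := fun h => hxS (Finset.mem_image.mpr ⟨c, h, rfl⟩)
        refine ⟨(t ∩ S, c), ?_, ?_⟩
        · simp only [Finset.mem_product, Finset.mem_powersetCard, Finset.mem_sdiff,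
            Finset.mem_univ, true_and]
          exact ⟨⟨Finset.inter_subset_right, hc2⟩, hcK⟩
        · apply Finset.eq_of_subset_of_card_le
          · intro y hy
            rcases Finset.mem_insert.mp hy with rfl | hy
            · exact hxt
            · exact (Finset.mem_inter.mp hy).1
          · rw [hc3, Finset.card_insert_of_notMem
              (fun h => hxS (Finset.mem_inter.mp h).2), hc2]
      · exfalso
        have haq : a ∈ q := hadjxa.symm
        have hbq : b ∈ q := hadjxb.symm
        have hqab : q = s(a, b) := (Sym2.mem_and_mem_iff hab).mp ⟨haq, hbq⟩
        apply hq.2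
        rw [hqab]
        exact (SimpleGraph.mem_edgeSet G).mpr (hclique haK hbK hab)
  have hOut' : triOut (cliqueAttach G T) S = Nat.choose k 2 * (Fintype.card V - k) := by
    rw [← key, Finset.card_product,
      Finset.card_powersetCard, hScard, Finset.card_sdiff_of_subset (Finset.subset_univ K),
      Finset.card_univ, hcard]
  refine ⟨hIn', hOut', ?_⟩
  rw [cohesion, hIn', hOut', hScard]
  have hpos : (0 : ℝ) < (Nat.choose k 3 : ℝ) := by
    exact_mod_cast Nat.choose_pos h3
  push_cast
  rw [sq, mul_div_mul_left _ _ (ne_of_gt hpos)]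
end

section
/- Let G = (V,E) be a finite simple graph with n = |V| ≥ 4, let G′ be the graph obtained from G by the clique-attachment construction, and fix k with 3 ≤ k ≤ n. If G contains a clique of size k, then G′ contains a connected set of vertices S (namely that clique) whose cohesion in G′ satisfies C_{G′}(S) ≥ λ(k) = choose(k,3) / (choose(k,3) + choose(k,2)·(n−k)). -/
open Finset
open scoped Classical

lemma triIn_of_clique {A : Type*} [Fintype A] (G : SimpleGraph A) (S : Finset A)
    (h : ∀ x ∈ S, ∀ y ∈ S, x ≠ y → G.Adj x y) :
    triIn G S = S.card.choose 3 := by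
  rw [triIn, ← Finset.card_powersetCard]
  congr 1
  ext t
  simp only [triangles, Finset.mem_filter, Finset.mem_univ, true_and,
    Finset.mem_powersetCard]
  constructor
  · rintro ⟨⟨hc, _⟩, hsub⟩; exact ⟨hsub, hc⟩
  · rintro ⟨hsub, hc⟩
    exact ⟨⟨hc, fun x hx y hy hxy => h x (hsub hx) y (hsub hy) hxy⟩, hsub⟩

lemma triOut_of_clique {A : Type*} [Fintype A] (G : SimpleGraph A) (S B : Finset A)
    (hSadj : ∀ x ∈ S, ∀ y ∈ S, x ≠ y → G.Adj x y)
    (hBS : ∀ b ∈ B, b ∉ S)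
    (hSB : ∀ x ∈ S, ∀ b ∈ B, G.Adj x b)
    (hthird : ∀ w, w ∉ S → ∀ x ∈ S, ∀ y ∈ S, x ≠ y → G.Adj w x → G.Adj w y → w ∈ B) :
    triOut G S = S.card.choose 2 * B.card := by
  rw [triOut, ← Finset.card_powersetCard 2 S, ← Finset.card_product]
  symm
  apply Finset.card_bij (fun eb _ => insert eb.2 eb.1)
  · rintro ⟨e, b⟩ heb
    simp only [Finset.mem_product, Finset.mem_powersetCard] at heb
    obtain ⟨⟨heS, he2⟩, hb⟩ := heb
    have hbS : b ∉ S := hBS b hb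
    have hbe : b ∉ e := fun h => hbS (heS h)
    simp only [triangles, Finset.mem_filter, Finset.mem_univ, true_and]
    refine ⟨⟨?_, ?_⟩, ?_⟩
    · rw [Finset.card_insert_of_notMem hbe, he2]
    · intro x hx y hy hxy
      simp only [Finset.coe_insert, Set.mem_insert_iff, Finset.mem_coe] at hx hy
      rcases hx with rfl | hx
      · rcases hy with rfl | hy
        · exact absurd rfl hxy
        · exact (hSB y (heS hy) x hb).symm
      · rcases hy with rfl | hy
        · exact hSB x (heS hx) y hb
        · exact hSadj x (heS hx) y (heS hy) hxy
    · rw [Finset.insert_inter_of_notMem hbS, Finset.inter_eq_left.mpr heS, he2]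
  · rintro ⟨e1, b1⟩ h1 ⟨e2, b2⟩ h2 heq
    simp only [Finset.mem_product, Finset.mem_powersetCard] at h1 h2
    obtain ⟨⟨he1S, _⟩, hb1⟩ := h1
    obtain ⟨⟨he2S, _⟩, hb2⟩ := h2
    have hb1S : b1 ∉ S := hBS b1 hb1
    have hb2S : b2 ∉ S := hBS b2 hb2
    dsimp only at heq
    have hbb : b1 = b2 := by
      have h := Finset.mem_insert_self b1 e1
      rw [heq] at h
      rcases Finset.mem_insert.mp h with h | h
      · exact h
      · exact absurd (he2S h) hb1S
    have hee : e1 = e2 := by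
      ext x
      constructor
      · intro hx
        have h : x ∈ insert b2 e2 := by
          rw [← heq]; exact Finset.mem_insert_of_mem hx
        rcases Finset.mem_insert.mp h with rfl | h
        · exact absurd (he1S hx) hb2S
        · exact h
      · intro hx
        have h : x ∈ insert b1 e1 := by
          rw [heq]
          exact Finset.mem_insert_of_mem hx
        rcases Finset.mem_insert.mp h with rfl | h
        · exact absurd (he2S hx) hb1S
        · exact h
    simp [hbb, hee]
  · intro t ht
    simp only [triangles, Finset.mem_filter, Finset.mem_univ, true_and] at ht
    obtain ⟨⟨hc3, hpw⟩, hc2⟩ := ht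
    have hsd : (t \ S).card = 1 := by
      have h := Finset.card_sdiff_add_card_inter t S
      omega
    obtain ⟨w, hw⟩ := Finset.card_eq_one.mp hsd
    have hwts : w ∈ t \ S := by rw [hw]; exact Finset.mem_singleton_self w
    have hwt : w ∈ t := (Finset.mem_sdiff.mp hwts).1
    have hwS : w ∉ S := (Finset.mem_sdiff.mp hwts).2
    obtain ⟨x, y, hxy, hxyeq⟩ := Finset.card_eq_two.mp hc2
    have hxS : x ∈ t ∩ S := by rw [hxyeq]; simp
    have hyS : y ∈ t ∩ S := by rw [hxyeq]; simp
    have hwB : w ∈ B := by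
      refine hthird w hwS x (Finset.mem_inter.mp hxS).2 y (Finset.mem_inter.mp hyS).2 hxy ?_ ?_
      · exact hpw hwt (Finset.mem_inter.mp hxS).1
          (fun h => hwS (h ▸ (Finset.mem_inter.mp hxS).2))
      · exact hpw hwt (Finset.mem_inter.mp hyS).1
          (fun h => hwS (h ▸ (Finset.mem_inter.mp hyS).2))
    refine ⟨(t ∩ S, w), ?_, ?_⟩
    · simp only [Finset.mem_product, Finset.mem_powersetCard]
      exact ⟨⟨Finset.inter_subset_right, hc2⟩, hwB⟩
    · show insert w (t ∩ S) = t
      ext z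
      simp only [Finset.mem_insert, Finset.mem_inter]
      constructor
      · rintro (rfl | ⟨hz, _⟩)
        · exact hwt
        · exact hz
      · intro hz
        by_cases hzS : z ∈ S
        · exact Or.inr ⟨hz, hzS⟩
        · left
          have hzw : z ∈ t \ S := Finset.mem_sdiff.mpr ⟨hz, hzS⟩
          rw [hw] at hzw
          exact Finset.mem_singleton.mp hzw

theorem exists_connected_cohesive_of_clique {V : Type*} [Fintype V] (G : SimpleGraph V)
    (hn : 4 ≤ Fintype.card V)
    (T : ℕ) (hT : T = 2 * (Nat.choose (Fintype.card V) 3) ^ 4)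
    (k : ℕ) (h3 : 3 ≤ k) (hkn : k ≤ Fintype.card V)
    (hclique : ∃ K : Finset V, G.IsClique (K : Set V) ∧ K.card = k) :
    ∃ S : Finset (V ⊕ ({p : Sym2 V // ¬ p.IsDiag ∧ p ∉ G.edgeSet} × Fin T)),
      ((cliqueAttach G T).induce (S : Set (V ⊕ ({p : Sym2 V // ¬ p.IsDiag ∧ p ∉ G.edgeSet} × Fin T)))).Connected ∧
      (Nat.choose k 3 : ℝ) /
          ((Nat.choose k 3 + Nat.choose k 2 * (Fintype.card V - k) : ℕ) : ℝ) ≤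
        cohesion (cliqueAttach G T) S := by
  classical
  obtain ⟨K, hK, hKcard⟩ := hclique
  obtain ⟨a0, ha0⟩ : K.Nonempty := Finset.card_pos.mp (by omega)
  set S : Finset (V ⊕ ({p : Sym2 V // ¬ p.IsDiag ∧ p ∉ G.edgeSet} × Fin T)) :=
    K.map ⟨Sum.inl, Sum.inl_injective⟩ with hS
  set B : Finset (V ⊕ ({p : Sym2 V // ¬ p.IsDiag ∧ p ∉ G.edgeSet} × Fin T)) :=
    Kᶜ.map ⟨Sum.inl, Sum.inl_injective⟩ with hB
  have hScard : S.card = k := by simp [hS, hKcard]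
  have hBcard : B.card = Fintype.card V - k := by
    simp [hB, Finset.card_compl, hKcard]
  have hmemS : ∀ x, x ∈ S ↔ ∃ a ∈ K, Sum.inl a = x := by intro x; simp [hS]
  have hmemB : ∀ x, x ∈ B ↔ ∃ a, a ∉ K ∧ Sum.inl a = x := by intro x; simp [hB]
  have hadj : ∀ a b : V, a ≠ b → (cliqueAttach G T).Adj (Sum.inl a) (Sum.inl b) :=
    fun a b hab => hab
  have hSadj : ∀ x ∈ S, ∀ y ∈ S, x ≠ y → (cliqueAttach G T).Adj x y := by
    intro x hx y hy hxy
    obtain ⟨a, _, rfl⟩ := (hmemS x).mp hx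
    obtain ⟨b, _, rfl⟩ := (hmemS y).mp hy
    exact hadj a b (fun h => hxy (by rw [h]))
  refine ⟨S, ?_, ?_⟩
  · -- connectedness
    haveI : Nonempty (↑(S : Set (V ⊕ ({p : Sym2 V // ¬ p.IsDiag ∧ p ∉ G.edgeSet} × Fin T)))) := by
      refine ⟨⟨Sum.inl a0, ?_⟩⟩
      exact (hmemS _).mpr ⟨a0, ha0, rfl⟩
    refine ⟨?_⟩
    intro u v
    by_cases huv : u = v
    · subst huv; rfl
    · exact SimpleGraph.Adj.reachable
        (hSadj u.1 u.2 v.1 v.2 (fun h => huv (Subtype.ext h)))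
  · have hIn : triIn (cliqueAttach G T) S = k.choose 3 := by
      rw [triIn_of_clique _ _ hSadj, hScard]
    have hOut : triOut (cliqueAttach G T) S = k.choose 2 * (Fintype.card V - k) := by
      rw [triOut_of_clique _ _ B hSadj ?_ ?_ ?_, hScard, hBcard]
      · intro b hb hbS
        obtain ⟨c, hc, rfl⟩ := (hmemB b).mp hb
        obtain ⟨a, ha, hac⟩ := (hmemS _).mp hbS
        exact hc (by rwa [← Sum.inl_injective hac])
      · intro x hx b hb
        obtain ⟨a, ha, rfl⟩ := (hmemS x).mp hx
        obtain ⟨c, hc, rfl⟩ := (hmemB b).mp hb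
        exact hadj a c (fun h => hc (h ▸ ha))
      · intro w hwS x hx y hy hxy hwx hwy
        obtain ⟨a, haK, rfl⟩ := (hmemS x).mp hx
        obtain ⟨b, hbK, rfl⟩ := (hmemS y).mp hy
        have hab : a ≠ b := fun h => hxy (by rw [h])
        obtain (c | ⟨p, i⟩) := w
        · refine (hmemB _).mpr ⟨c, ?_, rfl⟩
          intro h
          exact hwS ((hmemS _).mpr ⟨c, h, rfl⟩)
        · exfalso
          have hap : a ∈ (p : Sym2 V) := hwx.symm
          have hbp : b ∈ (p : Sym2 V) := hwy.symm
          have hpab : (p : Sym2 V) = s(a, b) :=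
            (Sym2.mem_and_mem_iff hab).mp ⟨hap, hbp⟩
          exact p.2.2 (hpab ▸ (hK haK hbK hab))
    rw [cohesion, hIn, hOut, hScard]
    have ha : (0:ℝ) < (k.choose 3 : ℝ) := by
      exact_mod_cast Nat.choose_pos h3
    rw [sq, mul_div_mul_left _ _ ha.ne']
    push_cast
    exact le_refl _
end
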